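/- arXiv:2508.04287 — 3 statements merged into one kernel-verified Lean document; each statement's English description precedes it below -/
import Mathlib

section
/- Let $a \in \mathbb{R}^{d_R \times d_R}$ be symmetric positive definite and $M \in \mathbb{R}^{d_S \times d_R}$, and set $a_S = M a M^\top$ and $\Sigma = \begin{pmatrix} \tfrac{1}{3} M a M^\top & \tfrac{1}{2} M a \\ \tfrac{1}{2} a M^\top & a \end{pmatrix}$. Then $\det \Sigma = 12^{-d_S}\, \det(a_S)\, \det(a)$. In particular, if $\det a_S > 0$ then $\Sigma$ is invertible. -/
open Matrix

/-- Determinant of the locally Gaussian block covariance: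
`det Σ = 12⁻ᵈˢ det(a_S) det(a)` where `a_S = M a Mᵀ`; in particular if
`det a_S > 0` then `Σ` is invertible. -/
theorem det_locally_gaussian_blocks {dS dR : ℕ} (hdS : 1 ≤ dS) (hdR : 1 ≤ dR)
    (a : Matrix (Fin dR) (Fin dR) ℝ) (ha : a.PosDef)
    (M : Matrix (Fin dS) (Fin dR) ℝ) :
    (Matrix.fromBlocks ((1 / 3 : ℝ) • (M * a * Mᵀ)) ((1 / 2 : ℝ) • (M * a))
        ((1 / 2 : ℝ) • (a * Mᵀ)) a).det
      = (1 / 12 : ℝ) ^ dS * (M * a * Mᵀ).det * a.det ∧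
    (0 < (M * a * Mᵀ).det →
      IsUnit (Matrix.fromBlocks ((1 / 3 : ℝ) • (M * a * Mᵀ)) ((1 / 2 : ℝ) • (M * a))
        ((1 / 2 : ℝ) • (a * Mᵀ)) a).det) := by
  have hinv : Invertible a := ha.isUnit.invertible
  have hIa : ⅟ a = a⁻¹ := invOf_eq_nonsing_inv a
  have hdet : (Matrix.fromBlocks ((1 / 3 : ℝ) • (M * a * Mᵀ)) ((1 / 2 : ℝ) • (M * a))
        ((1 / 2 : ℝ) • (a * Mᵀ)) a).det
      = (1 / 12 : ℝ) ^ dS * (M * a * Mᵀ).det * a.det := by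
    rw [det_fromBlocks₂₂, hIa]
    have hschur : ((1 / 3 : ℝ) • (M * a * Mᵀ)) - ((1 / 2 : ℝ) • (M * a)) * a⁻¹ *
        ((1 / 2 : ℝ) • (a * Mᵀ)) = (1 / 12 : ℝ) • (M * a * Mᵀ) := by
      have h : M * a * a⁻¹ * (a * Mᵀ) = M * a * Mᵀ := by
        rw [Matrix.mul_assoc (M * a) a⁻¹ (a * Mᵀ), ← Matrix.mul_assoc a⁻¹ a Mᵀ,
          Matrix.nonsing_inv_mul a (isUnit_iff_ne_zero.mpr ha.det_pos.ne'), Matrix.one_mul, Matrix.mul_assoc]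
      rw [Matrix.smul_mul, Matrix.mul_smul, Matrix.smul_mul, smul_smul, h, ← sub_smul]
      norm_num
    rw [hschur, det_smul, Fintype.card_fin]
    ring
  refine ⟨hdet, fun hpos => ?_⟩
  rw [hdet]
  have : 0 < (1 / 12 : ℝ) ^ dS * (M * a * Mᵀ).det * a.det :=
    mul_pos (mul_pos (pow_pos (by norm_num) dS) hpos) ha.det_pos
  exact isUnit_iff_ne_zero.mpr this.ne'
end

section
/- Let $Z$ be an index set and suppose $a_R : Z \to \mathbb{R}^{d_R \times d_R}$, $M : Z \to \mathbb{R}^{d_S \times d_R}$ are such that $a_R(z)$ is symmetric positive semidefinite for all $z$, $\inf_{z} \det a_R(z) \ge c_1 > 0$, and $\inf_{z} \det\bigl(M(z) a_R(z) M(z)^\top\bigr) \ge c_2 > 0$. Then defining $\Sigma(z) = \begin{pmatrix} \tfrac{1}{3} M(z) a_R(z) M(z)^\top & \tfrac{1}{2} M(z) a_R(z) \\ \tfrac{1}{2} a_R(z) M(z)^\top & a_R(z) \end{pmatrix}$, one has $\inf_{z} \det \Sigma(z) \ge 12^{-d_S} c_1 c_2 > 0$. -/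
open Matrix

/-- Uniform non-degeneracy of the locally Gaussian covariance under a uniform
Hörmander-type condition: if `det a_R(z) ≥ c₁ > 0` and
`det (M(z) a_R(z) M(z)ᵀ) ≥ c₂ > 0` uniformly in `z`, then
`det Σ(z) ≥ 12⁻ᵈˢ c₁ c₂ > 0` uniformly in `z`. -/
theorem uniform_nondegenerate_locally_gaussian {dS dR : ℕ} (hdS : 1 ≤ dS) (hdR : 1 ≤ dR)
    {Z : Type*} (aR : Z → Matrix (Fin dR) (Fin dR) ℝ)
    (M : Z → Matrix (Fin dS) (Fin dR) ℝ) (c₁ c₂ : ℝ) (hc₁ : 0 < c₁) (hc₂ : 0 < c₂)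
    (hpsd : ∀ z, (aR z).PosSemidef)
    (h₁ : ∀ z, c₁ ≤ (aR z).det)
    (h₂ : ∀ z, c₂ ≤ (M z * aR z * (M z)ᵀ).det) :
    (∀ z, (1 / 12 : ℝ) ^ dS * (c₁ * c₂) ≤
      (Matrix.fromBlocks ((1 / 3 : ℝ) • (M z * aR z * (M z)ᵀ))
        ((1 / 2 : ℝ) • (M z * aR z))
        ((1 / 2 : ℝ) • (aR z * (M z)ᵀ)) (aR z)).det) ∧
    0 < (1 / 12 : ℝ) ^ dS * (c₁ * c₂) := by
  have hpow : (0 : ℝ) < (1 / 12 : ℝ) ^ dS := by positivity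
  refine ⟨fun z => ?_, by positivity⟩
  have hdet : IsUnit (aR z).det :=
    isUnit_iff_ne_zero.mpr (by nlinarith [h₁ z])
  have : Invertible (aR z) := (aR z).invertibleOfIsUnitDet hdet
  rw [Matrix.det_fromBlocks₂₂]
  have hinv : aR z * (aR z)⁻¹ = 1 := Matrix.mul_nonsing_inv _ hdet
  have hB : (1 / 2 : ℝ) • (M z * aR z) * ⅟(aR z) * ((1 / 2 : ℝ) • (aR z * (M z)ᵀ))
      = (1 / 4 : ℝ) • (M z * aR z * (M z)ᵀ) := by
    rw [invOf_eq_nonsing_inv, Matrix.smul_mul, Matrix.smul_mul, Matrix.mul_smul, smul_smul]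
    congr 1
    · norm_num
    · calc M z * aR z * (aR z)⁻¹ * (aR z * (M z)ᵀ)
          = M z * (aR z * (aR z)⁻¹) * (aR z * (M z)ᵀ) := by
            rw [Matrix.mul_assoc (M z)]
        _ = M z * (aR z * (M z)ᵀ) := by rw [hinv, Matrix.mul_one]
        _ = M z * aR z * (M z)ᵀ := by rw [Matrix.mul_assoc]
  rw [hB]
  have hS : (1 / 3 : ℝ) • (M z * aR z * (M z)ᵀ) - (1 / 4 : ℝ) • (M z * aR z * (M z)ᵀ)
      = (1 / 12 : ℝ) • (M z * aR z * (M z)ᵀ) := by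
    rw [← sub_smul]; norm_num
  rw [hS, Matrix.det_smul, Fintype.card_fin]
  have key : c₁ * c₂ ≤ (aR z).det * (M z * aR z * (M z)ᵀ).det :=
    mul_le_mul (h₁ z) (h₂ z) (le_of_lt hc₂) (le_trans (le_of_lt hc₁) (h₁ z))
  calc (1 / 12 : ℝ) ^ dS * (c₁ * c₂)
      ≤ (1 / 12 : ℝ) ^ dS * ((aR z).det * (M z * aR z * (M z)ᵀ).det) :=
        mul_le_mul_of_nonneg_left key (le_of_lt hpow)
    _ = (aR z).det * ((1 / 12 : ℝ) ^ dS * (M z * aR z * (M z)ᵀ).det) := by ring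
end

section
/- For each $n \in \mathbb{N}$ let $(\mathcal{F}^n_j)_{0 \le j \le n}$ be a filtration on a probability space and $(G^n_j)_{1 \le j \le n}$ be square-integrable random variables with $G^n_j$ being $\mathcal{F}^n_j$-measurable. If $\sum_{j=1}^n \mathbb{E}[G^n_j \mid \mathcal{F}^n_{j-1}] \to 0$ in probability and $\sum_{j=1}^n \mathbb{E}[(G^n_j)^2 \mid \mathcal{F}^n_{j-1}] \to 0$ in probability as $n \to \infty$, then $\sum_{j=1}^n G^n_j \to 0$ in probability as $n \to \infty$. -/
open MeasureTheory Filter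
open scoped ENNReal

section Aux
variable {Ω : Type*}

lemma integrable_mul_L2 {m0 : MeasurableSpace Ω} {μ : Measure Ω} {f g : Ω → ℝ}
    (hf : MemLp f 2 μ) (hg : MemLp g 2 μ) : Integrable (fun x => f x * g x) μ := by
  have h1 := (hf.add hg).integrable_sq
  have h2 := hf.integrable_sq
  have h3 := hg.integrable_sq
  have heq : (fun x => f x * g x) = fun x => (((f x + g x) ^ 2 - f x ^ 2) - g x ^ 2) / 2 := by
    funext x; ring
  rw [heq]
  exact ((h1.sub h2).sub h3).div_const 2

lemma memℒp_two_condexp {m m0 : MeasurableSpace Ω} (hm : m ≤ m0) {μ : Measure Ω}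
    [IsFiniteMeasure μ] {f : Ω → ℝ} (hf : MemLp f 2 μ) : MemLp (μ[f|m]) 2 μ := by
  have hfi : Integrable f μ := hf.integrable one_le_two
  have hg2 : MemLp ((condExpL2 ℝ ℝ hm (hf.toLp f) : Lp ℝ 2 μ) : Ω → ℝ) 2 μ := Lp.memLp _
  have heq : ((condExpL2 ℝ ℝ hm (hf.toLp f) : Lp ℝ 2 μ) : Ω → ℝ) =ᵐ[μ] μ[f|m] := by
    refine ae_eq_condExp_of_forall_setIntegral_eq hm hfi
      (fun s _ _ => (integrable_condExpL2_of_isFiniteMeasure hm).integrableOn)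
      (fun s hs hμs => ?_) (lpMeas.aestronglyMeasurable _)
    rw [integral_condExpL2_eq hm (hf.toLp f) hs hμs.ne]
    exact setIntegral_congr_ae (hm s hs) ((hf.coeFn_toLp).mono fun x hx _ => hx)
  exact hg2.ae_eq heq

lemma integral_sq_sum_eq {m0 : MeasurableSpace Ω} {μ : Measure Ω} [IsProbabilityMeasure μ]
    {𝓖 : ℕ → MeasurableSpace Ω} (hle : ∀ j, 𝓖 j ≤ m0) (hmono : Monotone 𝓖)
    {n : ℕ} {Y : ℕ → Ω → ℝ}
    (hSM : ∀ j ∈ Finset.Icc 1 n, StronglyMeasurable[𝓖 j] (Y j))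
    (hY2 : ∀ j ∈ Finset.Icc 1 n, MemLp (Y j) 2 μ)
    (hY0 : ∀ j ∈ Finset.Icc 1 n, μ[Y j | 𝓖 (j - 1)] =ᵐ[μ] 0) :
    ∫ ω, (∑ j ∈ Finset.Icc 1 n, Y j ω) ^ 2 ∂μ
      = ∑ j ∈ Finset.Icc 1 n, ∫ ω, (Y j ω) ^ 2 ∂μ := by
  set s := Finset.Icc 1 n with hs
  have hint : ∀ i ∈ s, ∀ j ∈ s, Integrable (fun ω => Y i ω * Y j ω) μ :=
    fun i hi j hj => integrable_mul_L2 (hY2 i hi) (hY2 j hj)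
  have key : ∀ i ∈ s, ∀ j ∈ s, i < j → ∫ ω, Y i ω * Y j ω ∂μ = 0 := by
    intro i hi j hj hij
    have him : i ≤ j - 1 := Nat.le_sub_one_of_lt hij
    have hm : 𝓖 (j - 1) ≤ m0 := hle _
    have hmul : μ[(Y i * Y j)|𝓖 (j - 1)] =ᵐ[μ] Y i * μ[Y j|𝓖 (j - 1)] :=
      condExp_mul_of_stronglyMeasurable_left ((hSM i hi).mono (hmono him))
        (hint i hi j hj) ((hY2 j hj).integrable one_le_two)
    have hzero : μ[(Y i * Y j)|𝓖 (j - 1)] =ᵐ[μ] 0 := by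
      filter_upwards [hmul, hY0 j hj] with ω h1 h2
      simp only [Pi.mul_apply, Pi.zero_apply] at h1 h2 ⊢
      rw [h1, h2, mul_zero]
    calc ∫ ω, Y i ω * Y j ω ∂μ = ∫ ω, (μ[(Y i * Y j)|𝓖 (j - 1)]) ω ∂μ :=
          (integral_condExp (f := Y i * Y j) hm).symm
      _ = 0 := by rw [integral_congr_ae hzero]; simp
  have hexp : ∀ ω, (∑ j ∈ s, Y j ω) ^ 2 = ∑ i ∈ s, ∑ j ∈ s, Y i ω * Y j ω := by
    intro ω; rw [sq, Finset.sum_mul_sum]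
  calc ∫ ω, (∑ j ∈ s, Y j ω) ^ 2 ∂μ
      = ∫ ω, ∑ i ∈ s, ∑ j ∈ s, Y i ω * Y j ω ∂μ := by simp_rw [hexp]
    _ = ∑ i ∈ s, ∑ j ∈ s, ∫ ω, Y i ω * Y j ω ∂μ := by
        rw [integral_finset_sum s (fun i hi => integrable_finset_sum s (fun j hj => hint i hi j hj))]
        exact Finset.sum_congr rfl fun i hi => integral_finset_sum s (fun j hj => hint i hi j hj)
    _ = ∑ j ∈ s, ∫ ω, (Y j ω) ^ 2 ∂μ := by
        refine Finset.sum_congr rfl fun i hi => ?_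
        have h0 : ∀ j ∈ s, j ≠ i → ∫ ω, Y i ω * Y j ω ∂μ = 0 := by
          intro j hj hne
          rcases hne.lt_or_gt with h | h
          · simpa [mul_comm] using key j hj i hi h
          · exact key i hi j hj h
        rw [Finset.sum_eq_single i h0 (fun h => absurd hi h)]
        simp_rw [sq]

lemma sum_indicator_trunc_le {n : ℕ} {v : ℕ → ℝ} (hv : ∀ i ∈ Finset.Icc 1 n, 0 ≤ v i)
    {c : ℝ} (hc : 0 ≤ c) :
    ∑ j ∈ Finset.Icc 1 n, (if (∑ i ∈ Finset.Icc 1 j, v i) ≤ c then (1 : ℝ) else 0) * v j ≤ c := by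
  classical
  set s := Finset.Icc 1 n with hs
  set T := s.filter (fun j => (∑ i ∈ Finset.Icc 1 j, v i) ≤ c) with hT
  have hTeq : ∑ j ∈ s, (if (∑ i ∈ Finset.Icc 1 j, v i) ≤ c then (1 : ℝ) else 0) * v j
      = ∑ j ∈ T, v j := by
    rw [hT, Finset.sum_filter]
    exact Finset.sum_congr rfl fun j hj => by split <;> simp
  rw [hTeq]
  rcases T.eq_empty_or_nonempty with h | h
  · simp [h, hc]
  · set m := T.max' h with hmdef
    have hmT : m ∈ T := T.max'_mem h
    have hm_mem : m ∈ s := (Finset.mem_filter.1 hmT).1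
    have hmc : (∑ i ∈ Finset.Icc 1 m, v i) ≤ c := (Finset.mem_filter.1 hmT).2
    have hsub : T ⊆ Finset.Icc 1 m := by
      intro j hj
      have hjs := (Finset.mem_filter.1 hj).1
      rw [hs] at hjs
      exact Finset.mem_Icc.2 ⟨(Finset.mem_Icc.1 hjs).1, T.le_max' j hj⟩
    calc ∑ j ∈ T, v j ≤ ∑ j ∈ Finset.Icc 1 m, v j := by
          refine Finset.sum_le_sum_of_subset_of_nonneg hsub fun i hi _ => ?_
          have hmn : m ≤ n := by rw [hs] at hm_mem; exact (Finset.mem_Icc.1 hm_mem).2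
          exact hv i (Finset.mem_Icc.2
            ⟨(Finset.mem_Icc.1 hi).1, le_trans (Finset.mem_Icc.1 hi).2 hmn⟩)
      _ ≤ c := hmc

end Aux


/-- Triangular-array conditional convergence lemma (Genon-Catalot–Jacod, Lemma 9):
if the conditional means `∑_{j=1}^n E[Gⁿⱼ | 𝓕ⁿ_{j-1}]` and conditional second
moments `∑_{j=1}^n E[(Gⁿⱼ)² | 𝓕ⁿ_{j-1}]` both tend to `0` in probability, then
`∑_{j=1}^n Gⁿⱼ → 0` in probability. -/
theorem triangular_array_conditional_convergence
    {Ω : Type*} {m0 : MeasurableSpace Ω} (μ : Measure Ω) [IsProbabilityMeasure μ]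
    (𝓕 : ℕ → ℕ → MeasurableSpace Ω)
    (hle : ∀ n j, 𝓕 n j ≤ m0)
    (hmono : ∀ n, Monotone (𝓕 n))
    (G : ℕ → ℕ → Ω → ℝ)
    (hmeas : ∀ n j, 1 ≤ j → j ≤ n → Measurable[𝓕 n j] (G n j))
    (hL2 : ∀ n j, 1 ≤ j → j ≤ n → MemLp (G n j) 2 μ)
    (h1 : TendstoInMeasure μ
      (fun n ω => ∑ j ∈ Finset.Icc 1 n, (μ[G n j | 𝓕 n (j - 1)]) ω) atTop 0)
    (h2 : TendstoInMeasure μ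
      (fun n ω => ∑ j ∈ Finset.Icc 1 n,
        (μ[fun ω' => (G n j ω') ^ 2 | 𝓕 n (j - 1)]) ω) atTop 0) :
    TendstoInMeasure μ (fun n ω => ∑ j ∈ Finset.Icc 1 n, G n j ω) atTop 0 := by
  classical
  rw [tendstoInMeasure_iff_dist] at h1 h2 ⊢
  intro ε hε
  rw [ENNReal.tendsto_atTop_zero]
  intro δ hδ
  set r : ℝ≥0∞ := min δ 1 with hrdef
  have hr0 : r ≠ 0 := by
    simp only [hrdef, ne_eq, min_eq_iff]
    rintro (⟨h, -⟩ | ⟨h, -⟩) <;> simp_all [hδ.ne']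
  have hrT : r ≠ ⊤ := by
    simp only [hrdef]
    exact ne_top_of_le_ne_top ENNReal.one_ne_top (min_le_right _ _)
  set δ' : ℝ := r.toReal with hδ'def
  have hδ'pos : 0 < δ' := ENNReal.toReal_pos hr0 hrT
  have hε2 : (0 : ℝ) < ε / 2 := by positivity
  set c : ℝ := (ε / 2) ^ 2 * (δ' / 3) with hcdef
  have hcpos : 0 < c := by positivity
  have hr3pos : (0 : ℝ≥0∞) < r / 3 := ENNReal.div_pos hr0 (by norm_num)
  obtain ⟨N1, hN1⟩ := ENNReal.tendsto_atTop_zero.1 (h1 (ε / 2) hε2) (r / 3) hr3pos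
  obtain ⟨N2, hN2⟩ := ENNReal.tendsto_atTop_zero.1 (h2 c hcpos) (r / 3) hr3pos
  refine ⟨max N1 N2, fun n hn => ?_⟩
  -- notation for this fixed n
  set s : Finset ℕ := Finset.Icc 1 n with hsdef
  set cnd : ℕ → Ω → ℝ := fun j => μ[G n j | 𝓕 n (j - 1)] with hcnddef
  set V : ℕ → Ω → ℝ := fun j => μ[fun ω' => (G n j ω') ^ 2 | 𝓕 n (j - 1)] with hVdef
  set Sf : ℕ → Ω → ℝ := fun j ω => ∑ i ∈ Finset.Icc 1 j, V i ω with hSfdef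
  set K : ℕ → Ω → ℝ := fun j ω => if Sf j ω ≤ c then (1 : ℝ) else 0 with hKdef
  set X : ℕ → Ω → ℝ := fun j ω => G n j ω - cnd j ω with hXdef
  set Y : ℕ → Ω → ℝ := fun j ω => K j ω * X j ω with hYdef
  set M' : Ω → ℝ := fun ω => ∑ j ∈ s, Y j ω with hM'def
  set MX : Ω → ℝ := fun ω => ∑ j ∈ s, X j ω with hMXdef
  set C : Ω → ℝ := fun ω => ∑ j ∈ s, cnd j ω with hCdef
  -- basic facts
  have hKbd : ∀ j ω, ‖K j ω‖ ≤ 1 := by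
    intro j ω; simp only [hKdef, Real.norm_eq_abs]; split <;> norm_num
  have hKidem : ∀ j ω, K j ω * K j ω = K j ω := by
    intro j ω; simp only [hKdef]; split <;> norm_num
  have hG2 : ∀ j ∈ s, MemLp (G n j) 2 μ := fun j hj =>
    hL2 n j (Finset.mem_Icc.1 hj).1 (Finset.mem_Icc.1 hj).2
  have hGSM : ∀ j ∈ s, StronglyMeasurable[𝓕 n j] (G n j) := fun j hj =>
    (hmeas n j (Finset.mem_Icc.1 hj).1 (Finset.mem_Icc.1 hj).2).stronglyMeasurable
  have hcnd2 : ∀ j ∈ s, MemLp (cnd j) 2 μ := fun j hj =>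
    memℒp_two_condexp (hle n (j - 1)) (hG2 j hj)
  have hX2 : ∀ j ∈ s, MemLp (X j) 2 μ := fun j hj => (hG2 j hj).sub (hcnd2 j hj)
  have hKSM : ∀ j ∈ s, StronglyMeasurable[𝓕 n (j - 1)] (K j) := by
    intro j hj
    have hS : StronglyMeasurable[𝓕 n (j - 1)] (Sf j) := by
      show StronglyMeasurable[𝓕 n (j - 1)] fun ω => ∑ i ∈ Finset.Icc 1 j, V i ω
      refine Finset.stronglyMeasurable_fun_sum _ fun i hi => ?_
      have : (i - 1 : ℕ) ≤ j - 1 := Nat.sub_le_sub_right (Finset.mem_Icc.1 hi).2 1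
      exact stronglyMeasurable_condExp.mono (hmono n this)
    have hset : MeasurableSet[𝓕 n (j - 1)] {ω | Sf j ω ≤ c} :=
      measurableSet_le hS.measurable measurable_const
    have : K j = Set.indicator {ω | Sf j ω ≤ c} (fun _ => (1 : ℝ)) := by
      funext ω
      simp only [hKdef, Set.indicator_apply, Set.mem_setOf_eq]
    rw [this]
    exact stronglyMeasurable_const.indicator hset
  have hY2 : ∀ j ∈ s, MemLp (Y j) 2 μ := by
    intro j hj
    refine (hX2 j hj).of_le
      (((hKSM j hj).mono ((hmono n (Nat.sub_le j 1)).trans (hle n j))).aestronglyMeasurable.mul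
        (hX2 j hj).aestronglyMeasurable)
      (Filter.Eventually.of_forall fun ω => ?_)
    simp only [hYdef, norm_mul, Real.norm_eq_abs]
    calc |K j ω| * |X j ω| ≤ 1 * |X j ω| :=
          mul_le_mul_of_nonneg_right (hKbd j ω) (abs_nonneg _)
      _ = |X j ω| := one_mul _
  have hYSM : ∀ j ∈ s, StronglyMeasurable[𝓕 n j] (Y j) := by
    intro j hj
    exact ((hKSM j hj).mono (hmono n (Nat.sub_le j 1))).mul
      ((hGSM j hj).sub (stronglyMeasurable_condExp.mono (hmono n (Nat.sub_le j 1))))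
  have hX0 : ∀ j ∈ s, μ[X j | 𝓕 n (j - 1)] =ᵐ[μ] 0 := by
    intro j hj
    have hGint : Integrable (G n j) μ := (hG2 j hj).integrable one_le_two
    have hsub : μ[X j | 𝓕 n (j - 1)] =ᵐ[μ]
        μ[G n j | 𝓕 n (j - 1)] - μ[cnd j | 𝓕 n (j - 1)] :=
      condExp_sub hGint integrable_condExp _
    have hproj : μ[cnd j | 𝓕 n (j - 1)] = cnd j :=
      condExp_of_stronglyMeasurable (hle n (j - 1)) stronglyMeasurable_condExp
        integrable_condExp
    filter_upwards [hsub] with ω hω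
    simp only [Pi.zero_apply]
    rw [hω]
    rw [hproj]; simp [hcnddef]
  have hY0 : ∀ j ∈ s, μ[Y j | 𝓕 n (j - 1)] =ᵐ[μ] 0 := by
    intro j hj
    have hmulK : μ[(K j * X j) | 𝓕 n (j - 1)] =ᵐ[μ] K j * μ[X j | 𝓕 n (j - 1)] :=
      condExp_mul_of_stronglyMeasurable_left (hKSM j hj) ((hY2 j hj).integrable one_le_two)
        ((hX2 j hj).integrable one_le_two)
    filter_upwards [hmulK, hX0 j hj] with ω hω1 hω2
    simp only [Pi.mul_apply, Pi.zero_apply] at hω1 hω2 ⊢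
    have : (μ[Y j | 𝓕 n (j - 1)]) ω = (μ[(K j * X j) | 𝓕 n (j - 1)]) ω := rfl
    rw [this, hω1, hω2, mul_zero]
  -- nonnegativity of V
  have hVpos : ∀ᵐ ω ∂μ, ∀ i, 0 ≤ V i ω := by
    rw [ae_all_iff]
    intro i
    exact condExp_nonneg (Filter.Eventually.of_forall fun ω => sq_nonneg _)
  -- second moment bound for M'
  have hKVint : ∀ j ∈ s, Integrable (fun ω => K j ω * V j ω) μ := by
    intro j hj
    exact Integrable.bdd_mul integrable_condExp
      ((hKSM j hj).mono ((hmono n (Nat.sub_le j 1)).trans (hle n j))).aestronglyMeasurable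
      (c := 1) (ae_of_all _ (hKbd j))
  have hYsq_le : ∀ j ∈ s, ∫ ω, (Y j ω) ^ 2 ∂μ ≤ ∫ ω, K j ω * V j ω ∂μ := by
    intro j hj
    have hm : 𝓕 n (j - 1) ≤ m0 := hle n (j - 1)
    have hGint : Integrable (G n j) μ := (hG2 j hj).integrable one_le_two
    have hG2int : Integrable (fun ω => (G n j ω) ^ 2) μ := (hG2 j hj).integrable_sq
    have hKaesm : AEStronglyMeasurable (K j) μ :=
      ((hKSM j hj).mono (hm.trans le_rfl)).aestronglyMeasurable
    have hKcndSM : StronglyMeasurable[𝓕 n (j - 1)] (fun ω => K j ω * cnd j ω) :=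
      (hKSM j hj).mul stronglyMeasurable_condExp
    have hcndGint : Integrable (fun ω => cnd j ω * G n j ω) μ :=
      integrable_mul_L2 (hcnd2 j hj) (hG2 j hj)
    have hcnd2int : Integrable (fun ω => cnd j ω * cnd j ω) μ :=
      integrable_mul_L2 (hcnd2 j hj) (hcnd2 j hj)
    have Ia : Integrable (fun ω => K j ω * (G n j ω) ^ 2) μ :=
      Integrable.bdd_mul hG2int hKaesm (c := 1) (ae_of_all _ (hKbd j))
    have Ib : Integrable (fun ω => K j ω * (cnd j ω * G n j ω)) μ :=
      Integrable.bdd_mul hcndGint hKaesm (c := 1) (ae_of_all _ (hKbd j))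
    have Ic : Integrable (fun ω => K j ω * (cnd j ω * cnd j ω)) μ :=
      Integrable.bdd_mul hcnd2int hKaesm (c := 1) (ae_of_all _ (hKbd j))
    -- cross-term identity
    have hcross : ∫ ω, K j ω * (cnd j ω * G n j ω) ∂μ
        = ∫ ω, K j ω * (cnd j ω * cnd j ω) ∂μ := by
      have hfSM : StronglyMeasurable[𝓕 n (j - 1)] (fun ω => K j ω * cnd j ω) := hKcndSM
      have hfg : Integrable ((fun ω => K j ω * cnd j ω) * G n j) μ := by
        have : ((fun ω => K j ω * cnd j ω) * G n j)
            = fun ω => K j ω * (cnd j ω * G n j ω) := by funext ω; simp [mul_assoc]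
        rw [this]; exact Ib
      have hmul : μ[(fun ω => K j ω * cnd j ω) * G n j | 𝓕 n (j - 1)]
          =ᵐ[μ] (fun ω => K j ω * cnd j ω) * μ[G n j | 𝓕 n (j - 1)] :=
        condExp_mul_of_stronglyMeasurable_left hfSM hfg hGint
      calc ∫ ω, K j ω * (cnd j ω * G n j ω) ∂μ
          = ∫ ω, ((fun ω => K j ω * cnd j ω) * G n j) ω ∂μ := by
            congr 1; funext ω; simp [mul_assoc]
        _ = ∫ ω, (μ[(fun ω => K j ω * cnd j ω) * G n j | 𝓕 n (j - 1)]) ω ∂μ :=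
            (integral_condExp (f := (fun ω => K j ω * cnd j ω) * G n j) hm).symm
        _ = ∫ ω, ((fun ω => K j ω * cnd j ω) * μ[G n j | 𝓕 n (j - 1)]) ω ∂μ :=
            integral_congr_ae hmul
        _ = ∫ ω, K j ω * (cnd j ω * cnd j ω) ∂μ := by
            congr 1; funext ω; simp [hcnddef, mul_assoc]
    -- conditional second moment identity
    have hKG2 : ∫ ω, K j ω * (G n j ω) ^ 2 ∂μ = ∫ ω, K j ω * V j ω ∂μ := by
      have hfg : Integrable ((K j) * fun ω => (G n j ω) ^ 2) μ := by
        have : ((K j) * fun ω => (G n j ω) ^ 2) = fun ω => K j ω * (G n j ω) ^ 2 := rfl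
        rw [this]; exact Ia
      have hmul : μ[(K j) * (fun ω => (G n j ω) ^ 2) | 𝓕 n (j - 1)]
          =ᵐ[μ] (K j) * μ[(fun ω => (G n j ω) ^ 2) | 𝓕 n (j - 1)] :=
        condExp_mul_of_stronglyMeasurable_left (hKSM j hj) hfg hG2int
      calc ∫ ω, K j ω * (G n j ω) ^ 2 ∂μ
          = ∫ ω, ((K j) * fun ω => (G n j ω) ^ 2) ω ∂μ := rfl
        _ = ∫ ω, (μ[(K j) * (fun ω => (G n j ω) ^ 2) | 𝓕 n (j - 1)]) ω ∂μ :=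
            (integral_condExp (f := (K j) * fun ω => (G n j ω) ^ 2) hm).symm
        _ = ∫ ω, ((K j) * μ[(fun ω => (G n j ω) ^ 2) | 𝓕 n (j - 1)]) ω ∂μ :=
            integral_congr_ae hmul
        _ = ∫ ω, K j ω * V j ω ∂μ := rfl
    -- expand the square
    have hptws : (fun ω => (Y j ω) ^ 2)
        = fun ω => K j ω * (G n j ω) ^ 2 - 2 * (K j ω * (cnd j ω * G n j ω))
            + K j ω * (cnd j ω * cnd j ω) := by
      funext ω
      have hid := hKidem j ω
      simp only [hYdef, hXdef]
      linear_combination (G n j ω - cnd j ω) ^ 2 * hid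
    have hIcnonneg : 0 ≤ ∫ ω, K j ω * (cnd j ω * cnd j ω) ∂μ := by
      apply integral_nonneg
      intro ω
      have h0K : 0 ≤ K j ω := by simp only [hKdef]; split <;> norm_num
      show 0 ≤ K j ω * (cnd j ω * cnd j ω)
      exact mul_nonneg h0K (mul_self_nonneg _)
    calc ∫ ω, (Y j ω) ^ 2 ∂μ
        = ∫ ω, (K j ω * (G n j ω) ^ 2 - 2 * (K j ω * (cnd j ω * G n j ω))
            + K j ω * (cnd j ω * cnd j ω)) ∂μ := by rw [hptws]
      _ = ∫ ω, (K j ω * (G n j ω) ^ 2 - 2 * (K j ω * (cnd j ω * G n j ω))) ∂μ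
            + ∫ ω, K j ω * (cnd j ω * cnd j ω) ∂μ :=
          integral_add (Ia.sub (Ib.const_mul 2)) Ic
      _ = ∫ ω, K j ω * (G n j ω) ^ 2 ∂μ - 2 * ∫ ω, K j ω * (cnd j ω * G n j ω) ∂μ
            + ∫ ω, K j ω * (cnd j ω * cnd j ω) ∂μ := by
          rw [integral_sub Ia (Ib.const_mul 2), integral_const_mul]
      _ = ∫ ω, K j ω * (G n j ω) ^ 2 ∂μ - ∫ ω, K j ω * (cnd j ω * cnd j ω) ∂μ := by
          rw [hcross]; ring
      _ ≤ ∫ ω, K j ω * (G n j ω) ^ 2 ∂μ := by linarith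
      _ = ∫ ω, K j ω * V j ω ∂μ := hKG2
  have hM'sq : ∫ ω, (M' ω) ^ 2 ∂μ ≤ c := by
    have hBsum := integral_sq_sum_eq (hle n) (hmono n) hYSM hY2 hY0
    calc ∫ ω, (M' ω) ^ 2 ∂μ = ∑ j ∈ s, ∫ ω, (Y j ω) ^ 2 ∂μ := hBsum
      _ ≤ ∑ j ∈ s, ∫ ω, K j ω * V j ω ∂μ := Finset.sum_le_sum hYsq_le
      _ = ∫ ω, ∑ j ∈ s, K j ω * V j ω ∂μ := (integral_finset_sum s hKVint).symm
      _ ≤ ∫ ω, (c : ℝ) ∂μ := by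
          refine integral_mono_ae (integrable_finset_sum s hKVint) (integrable_const c) ?_
          filter_upwards [hVpos] with ω hω
          exact sum_indicator_trunc_le (fun i _ => hω i) hcpos.le
      _ = c := by simp
  -- Chebyshev for M'
  have hM'2 : MemLp M' 2 μ := memLp_finset_sum s hY2
  have hM'int2 : Integrable (fun ω => (M' ω) ^ 2) μ := hM'2.integrable_sq
  have hcheb : μ {x | ε / 2 ≤ |M' x|} ≤ r / 3 := by
    have hsub : {x | ε / 2 ≤ |M' x|} ⊆ {x | (ε / 2) ^ 2 ≤ (M' x) ^ 2} := by
      intro x hx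
      have h1 : (ε / 2) ^ 2 ≤ |M' x| ^ 2 := pow_le_pow_left₀ hε2.le hx 2
      simpa [sq_abs] using h1
    have hmark := mul_meas_ge_le_integral_of_nonneg
      (Filter.Eventually.of_forall fun ω => sq_nonneg (M' ω)) hM'int2 ((ε / 2) ^ 2)
    have hε2sq : (0 : ℝ) < (ε / 2) ^ 2 := by positivity
    have htoReal : (μ {x | (ε / 2) ^ 2 ≤ (M' x) ^ 2}).toReal ≤ δ' / 3 := by
      have h := le_trans hmark hM'sq
      rw [hcdef] at h
      rw [measureReal_def] at h
      nlinarith [h]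
    have hofReal : ENNReal.ofReal (δ' / 3) = r / 3 := by
      rw [ENNReal.ofReal_div_of_pos (by norm_num), hδ'def, ENNReal.ofReal_toReal hrT]
      norm_num
    calc μ {x | ε / 2 ≤ |M' x|} ≤ μ {x | (ε / 2) ^ 2 ≤ (M' x) ^ 2} := measure_mono hsub
      _ = ENNReal.ofReal ((μ {x | (ε / 2) ^ 2 ≤ (M' x) ^ 2}).toReal) :=
          (ENNReal.ofReal_toReal (measure_ne_top μ _)).symm
      _ ≤ ENNReal.ofReal (δ' / 3) := ENNReal.ofReal_le_ofReal htoReal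
      _ = r / 3 := hofReal
  -- from martingale part to MX
  have hMXbound : μ {x | ε / 2 ≤ |MX x|}
      ≤ μ {x | c ≤ dist (Sf n x) 0} + μ {x | ε / 2 ≤ |M' x|} := by
    refine le_trans (measure_mono_ae ?_) (measure_union_le _ _)
    filter_upwards [hVpos] with ω hω hmem
    by_cases hSn : Sf n ω ≤ c
    · right
      have hKall : ∀ j ∈ s, K j ω = 1 := by
        intro j hj
        have hjn : j ≤ n := (Finset.mem_Icc.1 hj).2
        have hSj : Sf j ω ≤ Sf n ω := by
          apply Finset.sum_le_sum_of_subset_of_nonneg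
          · exact Finset.Icc_subset_Icc le_rfl hjn
          · intro i _ _; exact hω i
        simp only [hKdef]
        rw [if_pos (hSj.trans hSn)]
      have : M' ω = MX ω := by
        simp only [hM'def, hMXdef]
        refine Finset.sum_congr rfl fun j hj => ?_
        simp only [hYdef]
        rw [hKall j hj, one_mul]
      show ε / 2 ≤ |M' ω|; rw [this]; exact hmem
    · left
      simp only [Set.mem_setOf_eq, Real.dist_0_eq_abs]
      have : c < Sf n ω := lt_of_not_ge hSn
      exact le_trans this.le (le_abs_self _)
  -- decompose the sum
  have hdecomp : ∀ ω, ∑ j ∈ s, G n j ω = C ω + MX ω := by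
    intro ω
    simp only [hCdef, hMXdef, hXdef, ← Finset.sum_add_distrib]
    exact Finset.sum_congr rfl fun j hj => by ring
  have hmain : {x | ε ≤ dist (∑ j ∈ s, G n j x) ((0 : Ω → ℝ) x)}
      ⊆ {x | ε / 2 ≤ |C x|} ∪ {x | ε / 2 ≤ |MX x|} := by
    intro x hx
    simp only [Set.mem_setOf_eq, Pi.zero_apply, Real.dist_0_eq_abs] at hx
    rw [hdecomp x] at hx
    by_contra hcon
    simp only [Set.mem_union, Set.mem_setOf_eq, not_or, not_le] at hcon
    have := abs_add_le (C x) (MX x)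
    linarith [this, hcon.1, hcon.2]
  -- assemble
  have hCset : {x | ε / 2 ≤ |C x|}
      = {x | ε / 2 ≤ dist ((fun ω => ∑ j ∈ Finset.Icc 1 n, (μ[G n j | 𝓕 n (j - 1)]) ω) x)
          ((0 : Ω → ℝ) x)} := by
    ext x
    simp [hCdef, hcnddef, Real.dist_0_eq_abs, hsdef]
  have hSset : {x | c ≤ dist (Sf n x) 0}
      = {x | c ≤ dist ((fun ω => ∑ j ∈ Finset.Icc 1 n,
          (μ[fun ω' => (G n j ω') ^ 2 | 𝓕 n (j - 1)]) ω) x) ((0 : Ω → ℝ) x)} := by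
    ext x
    simp [hSfdef, hVdef, Real.dist_0_eq_abs]
  calc μ {x | ε ≤ dist (∑ j ∈ Finset.Icc 1 n, G n j x) ((0 : Ω → ℝ) x)}
      ≤ μ ({x | ε / 2 ≤ |C x|} ∪ {x | ε / 2 ≤ |MX x|}) := measure_mono hmain
    _ ≤ μ {x | ε / 2 ≤ |C x|} + μ {x | ε / 2 ≤ |MX x|} := measure_union_le _ _
    _ ≤ r / 3 + (μ {x | c ≤ dist (Sf n x) 0} + μ {x | ε / 2 ≤ |M' x|}) := by
        refine add_le_add ?_ hMXbound
        rw [hCset]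
        exact hN1 n (le_trans (le_max_left _ _) hn)
    _ ≤ r / 3 + (r / 3 + r / 3) := by
        refine add_le_add le_rfl (add_le_add ?_ hcheb)
        rw [hSset]
        exact hN2 n (le_trans (le_max_right _ _) hn)
    _ ≤ r := by
        rw [ENNReal.div_add_div_same, ENNReal.div_add_div_same]
        rw [ENNReal.div_le_iff (by norm_num) (by norm_num)]
        ring_nf
        exact le_rfl
    _ ≤ δ := min_le_left _ _
end
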